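/- arXiv:math/0502583 — 2 statements merged into one kernel-verified Lean document; each statement's English description precedes it below -/
import Mathlib

section
/- Let G be a group, ω : G → ℝ a weight, x ∈ G, and C ≥ 0 a constant such that |ω(y) − ω(x⁻¹y)| ≤ C for all y ∈ G. Then the commutator [D_ω, π(δ_x)] is bounded on ℂ[G] with ℓ²-operator norm at most C: for every ξ ∈ ℂ[G], Σ_{y∈G} |ω(y)·(δ_x * ξ)(y) − (δ_x * (D_ω ξ))(y)|² ≤ C² · Σ_{y∈G} |ξ(y)|². -/
/-- The Dirac operator of a weight `ω : G → ℝ`, acting on the group algebra by pointwise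
multiplication: `(D_ω ξ)(y) = ω(y) ξ(y)`. -/
noncomputable def dirac {G : Type*} [Group G] (ω : G → ℝ) (ξ : MonoidAlgebra ℂ G) :
    MonoidAlgebra ℂ G :=
  MonoidAlgebra.ofCoeff (Finsupp.ofSupportFinite (fun y => (ω y : ℂ) * ξ.coeff y)
    (Set.Finite.subset (Finsupp.finite_support ξ.coeff) fun _ hy =>
      Function.mem_support.mpr (right_ne_zero_of_mul (Function.mem_support.mp hy))))

/-- If `|ω(y) - ω(x⁻¹y)| ≤ C` for all `y`, then the commutator `[D_ω, π(δ_x)]` is bounded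
on `ℂ[G]` with ℓ²-operator norm at most `C`. -/
theorem stmt10 {G : Type*} [Group G] (ω : G → ℝ) (x : G) (C : ℝ) (hC : 0 ≤ C)
    (hbound : ∀ y : G, |ω y - ω (x⁻¹ * y)| ≤ C) (ξ : MonoidAlgebra ℂ G) :
    ∑ᶠ y, ‖(ω y : ℂ) * (MonoidAlgebra.single x (1 : ℂ) * ξ).coeff y -
        (MonoidAlgebra.single x (1 : ℂ) * dirac ω ξ).coeff y‖ ^ 2 ≤
      C ^ 2 * ∑ᶠ y, ‖ξ.coeff y‖ ^ 2 := by
  classical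
  have hterm : ∀ y : G,
      ‖(ω y : ℂ) * (MonoidAlgebra.single x (1 : ℂ) * ξ).coeff y -
        (MonoidAlgebra.single x (1 : ℂ) * dirac ω ξ).coeff y‖ ^ 2
      = |ω y - ω (x⁻¹ * y)| ^ 2 * ‖ξ.coeff (x⁻¹ * y)‖ ^ 2 := by
    intro y
    rw [MonoidAlgebra.single_mul_apply, MonoidAlgebra.single_mul_apply]
    have hd : (dirac ω ξ).coeff (x⁻¹ * y) = (ω (x⁻¹ * y) : ℂ) * ξ.coeff (x⁻¹ * y) := rfl
    rw [hd, one_mul, one_mul, ← sub_mul, norm_mul, mul_pow]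
    congr 2
    rw [← Complex.ofReal_sub, Complex.norm_real, Real.norm_eq_abs]
  -- support control
  set f : G → ℝ := fun y => ‖(ω y : ℂ) * (MonoidAlgebra.single x (1 : ℂ) * ξ).coeff y -
        (MonoidAlgebra.single x (1 : ℂ) * dirac ω ξ).coeff y‖ ^ 2 with hf
  set T : Finset G := ξ.coeff.support.image (fun z => x * z) with hT
  have hsupp : Function.support f ⊆ (T : Set G) := by
    intro y hy
    by_contra hyT
    apply hy
    have hz : ξ.coeff (x⁻¹ * y) = 0 := by
      by_contra h
      exact hyT (Finset.mem_coe.mpr (Finset.mem_image.mpr ⟨x⁻¹ * y,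
        Finsupp.mem_support_iff.mpr h, by group⟩))
    simp [hf, hterm y, hz]
    show (ω (x⁻¹ * y) : ℂ) * ξ.coeff (x⁻¹ * y) = 0
    simp [hz]
  have h1 : ∑ᶠ y, f y = ∑ y ∈ T, f y :=
    finsum_eq_finset_sum_of_support_subset f hsupp
  have h2 : ∑ᶠ y, ‖ξ.coeff y‖ ^ 2 = ∑ y ∈ ξ.coeff.support, ‖ξ.coeff y‖ ^ 2 := by
    apply finsum_eq_finset_sum_of_support_subset
    intro y hy
    simp only [Function.mem_support] at hy
    simp only [Finset.coe_sort_coe, Finset.mem_coe, Finsupp.mem_support_iff]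
    intro h; apply hy; simp [h]
  rw [h1, h2]
  have h3 : ∑ y ∈ T, f y = ∑ z ∈ ξ.coeff.support, f (x * z) := by
    rw [hT, Finset.sum_image]
    intro a _ b _ hab
    exact mul_left_cancel hab
  rw [h3, Finset.mul_sum]
  apply Finset.sum_le_sum
  intro z hz
  rw [hf]
  simp only
  rw [hterm (x * z)]
  have hx : x⁻¹ * (x * z) = z := by group
  rw [hx]
  apply mul_le_mul_of_nonneg_right _ (by positivity)
  have := hbound (x * z)
  rw [hx] at this
  exact pow_le_pow_left₀ (abs_nonneg _) this 2
end

section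
/- Let G be a group, ω : G → ℝ a weight, and x, y, z ∈ G. Writing π(f)ξ = f * ξ for the left regular action on ℂ[G], J(ξ)(g) = conj(ξ(g⁻¹)), and (D_ω ξ)(g) = ω(g)ξ(g), the following two identities hold: [D_ω, π(δ_x)]( (J ∘ π(δ_y) ∘ J)(δ_z) ) = (ω(xzy⁻¹) − ω(zy⁻¹)) · δ_{xzy⁻¹}, and (J ∘ π(δ_y) ∘ J)( [D_ω, π(δ_x)](δ_z) ) = (ω(xz) − ω(z)) · δ_{xzy⁻¹}. Consequently the first order condition [[D_ω, π(δ_x)], J π(δ_y) J] = 0 for all x, y, z ∈ G holds if and only if ω(xzy⁻¹) − ω(zy⁻¹) = ω(xz) − ω(z) for all x, y, z ∈ G. -/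
/-- The involution on the group algebra `ℂ[G]`: `J(ξ)(g) = conj (ξ g⁻¹)`. -/
noncomputable def invol {G : Type*} [Group G] (f : MonoidAlgebra ℂ G) : MonoidAlgebra ℂ G :=
  MonoidAlgebra.ofCoeff
    (Finsupp.mapRange (starRingEnd ℂ) (map_zero _) (Finsupp.equivMapDomain (Equiv.inv G) f.coeff))

section helpers
variable {G : Type*} [Group G]

lemma dirac_apply' (ω : G → ℝ) (ξ : MonoidAlgebra ℂ G) (g : G) :
    (dirac ω ξ).coeff g = (ω g : ℂ) * ξ.coeff g := rfl

lemma invol_apply' (f : MonoidAlgebra ℂ G) (g : G) :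
    (invol f).coeff g = starRingEnd ℂ (f.coeff g⁻¹) := rfl

lemma JmJ (y : G) (ξ : MonoidAlgebra ℂ G) (g : G) :
    (invol (MonoidAlgebra.single y (1 : ℂ) * invol ξ)).coeff g = ξ.coeff (g * y) := by
  simp [invol_apply', MonoidAlgebra.coeff_single_mul_apply, mul_inv_rev]

lemma comm_apply (ω : G → ℝ) (x : G) (ξ : MonoidAlgebra ℂ G) (g : G) :
    (dirac ω (MonoidAlgebra.single x (1 : ℂ) * ξ) -
        MonoidAlgebra.single x (1 : ℂ) * dirac ω ξ).coeff g =
      ((ω g : ℂ) - (ω (x⁻¹ * g) : ℂ)) * ξ.coeff (x⁻¹ * g) := by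
  have : ∀ f h : MonoidAlgebra ℂ G, (f - h).coeff g = f.coeff g - h.coeff g := fun _ _ => rfl
  rw [this, dirac_apply', MonoidAlgebra.coeff_single_mul_apply, MonoidAlgebra.coeff_single_mul_apply,
    dirac_apply', one_mul, one_mul]
  ring

end helpers

open MonoidAlgebra in
/-- The two basic identities
`[D_ω, π(δ_x)] (J π(δ_y) J δ_z) = (ω(xzy⁻¹) − ω(zy⁻¹)) δ_{xzy⁻¹}` and
`(J π(δ_y) J) ([D_ω, π(δ_x)] δ_z) = (ω(xz) − ω(z)) δ_{xzy⁻¹}`, and the consequence that the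
first order condition `[[D_ω, π(δ_x)], J π(δ_y) J] = 0` holds if and only if
`ω(xzy⁻¹) − ω(zy⁻¹) = ω(xz) − ω(z)` for all `x, y, z`. -/
theorem stmt15 {G : Type*} [Group G] (ω : G → ℝ) :
    (∀ x y z : G,
      dirac ω (single x (1 : ℂ) * invol (single y (1 : ℂ) * invol (single z (1 : ℂ)))) -
          single x (1 : ℂ) * dirac ω (invol (single y (1 : ℂ) * invol (single z (1 : ℂ)))) =
        single (x * z * y⁻¹) (((ω (x * z * y⁻¹) - ω (z * y⁻¹) : ℝ) : ℂ))) ∧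
    (∀ x y z : G,
      invol (single y (1 : ℂ) *
          invol (dirac ω (single x (1 : ℂ) * single z (1 : ℂ)) -
            single x (1 : ℂ) * dirac ω (single z (1 : ℂ)))) =
        single (x * z * y⁻¹) (((ω (x * z) - ω z : ℝ) : ℂ))) ∧
    ((∀ (x y : G) (ξ : MonoidAlgebra ℂ G),
        dirac ω (single x (1 : ℂ) * invol (single y (1 : ℂ) * invol ξ)) -
            single x (1 : ℂ) * dirac ω (invol (single y (1 : ℂ) * invol ξ)) =
          invol (single y (1 : ℂ) *
            invol (dirac ω (single x (1 : ℂ) * ξ) - single x (1 : ℂ) * dirac ω ξ))) ↔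
      ∀ x y z : G, ω (x * z * y⁻¹) - ω (z * y⁻¹) = ω (x * z) - ω z) := by
  have h1 : ∀ x y z : G,
      dirac ω (single x (1 : ℂ) * invol (single y (1 : ℂ) * invol (single z (1 : ℂ)))) -
          single x (1 : ℂ) * dirac ω (invol (single y (1 : ℂ) * invol (single z (1 : ℂ)))) =
        single (x * z * y⁻¹) (((ω (x * z * y⁻¹) - ω (z * y⁻¹) : ℝ) : ℂ)) := by
    intro x y z
    ext g
    rw [comm_apply]
    rw [JmJ]
    by_cases h : g = x * z * y⁻¹
    · subst h
      have e1 : x⁻¹ * (x * z * y⁻¹) * y = z := by group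
      have e2 : x⁻¹ * (x * z * y⁻¹) = z * y⁻¹ := by group
      simp [MonoidAlgebra.single_apply, e1, e2]
    · have hz : z ≠ x⁻¹ * g * y := by
        intro hz
        exact h (by rw [hz]; group)
      simp [MonoidAlgebra.single_apply, hz, show x * z * y⁻¹ ≠ g from fun hh => h hh.symm]
  have h2 : ∀ x y z : G,
      invol (single y (1 : ℂ) *
          invol (dirac ω (single x (1 : ℂ) * single z (1 : ℂ)) -
            single x (1 : ℂ) * dirac ω (single z (1 : ℂ)))) =
        single (x * z * y⁻¹) (((ω (x * z) - ω z : ℝ) : ℂ)) := by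
    intro x y z
    ext g
    rw [JmJ, comm_apply]
    by_cases h : g = x * z * y⁻¹
    · subst h
      have e1 : x⁻¹ * (x * z * y⁻¹ * y) = z := by group
      have e2 : x * z * y⁻¹ * y = x * z := by group
      simp [MonoidAlgebra.single_apply, e1, e2]
    · have hz : z ≠ x⁻¹ * (g * y) := by
        intro hz
        exact h (by rw [hz]; group)
      simp [MonoidAlgebra.single_apply, hz, show x * z * y⁻¹ ≠ g from fun hh => h hh.symm]
  refine ⟨h1, h2, ?_, ?_⟩
  · intro h x y z
    have e := (h1 x y z).symm.trans ((h x y (single z 1)).trans (h2 x y z))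
    have e2 := congrArg (fun f : MonoidAlgebra ℂ G => f.coeff (x * z * y⁻¹)) e
    simp only [MonoidAlgebra.single, MonoidAlgebra.coeff_ofCoeff, Finsupp.single_eq_same] at e2
    exact_mod_cast e2
  · intro h x y ξ
    ext g
    rw [comm_apply, JmJ, JmJ, comm_apply]
    have h' := h x y (x⁻¹ * g * y)
    rw [show x * (x⁻¹ * g * y) * y⁻¹ = g by group, show x⁻¹ * g * y * y⁻¹ = x⁻¹ * g by group,
      show x * (x⁻¹ * g * y) = g * y by group] at h'
    rw [← mul_assoc]
    congr 1
    exact_mod_cast h'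
end
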